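/- Suppose the support of μ is an interval [x̲, x̄] with −∞ ≤ x̲ < x̄ ≤ ∞ (i.e., μ(ℝ ∖ [x̲, x̄]) = 0 and μ(I) > 0 for every open interval I meeting (x̲, x̄)), and suppose f_ε > 0 on (e̲, ē) and f_ε = 0 outside [e̲, ē], where −∞ < e̲ < ē < ∞ and ē − e̲ ≤ x̄ − x̲. Then for all z1 < z2 at which both posteriors are defined, there exists w with F(w|z1) > F(w|z2): the posterior given the lower signal never (even weakly) first-order stochastically dominates the posterior given the higher signal. -/

import Mathlib

open MeasureTheory Set

/-- The posterior cdf of `X` given the signal realization `Z = z`, where the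
prior of `X` is `μ` and the independent noise `ε = Z − X` has Lebesgue
density `fε`. -/
noncomputable def postCdf (μ : Measure ℝ) (fε : ℝ → ℝ) (w z : ℝ) : ℝ :=
  (∫ x in Iic w, fε (z - x) ∂μ) / (∫ x, fε (z - x) ∂μ)

private lemma aux_zero (μ : Measure ℝ) (g : ℝ → ℝ) (w : ℝ) (h : ∀ x ≤ w, g x = 0) :
    ∫ x in Iic w, g x ∂μ = 0 := by
  rw [setIntegral_congr_fun measurableSet_Iic (g := fun _ => (0:ℝ)) (fun x hx => h x hx)]
  simp

private lemma aux_full (μ : Measure ℝ) (g : ℝ → ℝ) (w : ℝ) (hint : Integrable g μ)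
    (h : ∀ x, w < x → g x = 0) :
    ∫ x in Iic w, g x ∂μ = ∫ x, g x ∂μ := by
  rw [← integral_add_compl measurableSet_Iic hint]
  have h2 : ∫ x in (Iic w)ᶜ, g x ∂μ = 0 := by
    rw [setIntegral_congr_fun measurableSet_Iic.compl (g := fun _ => (0:ℝ))
      (fun x hx => h x (by simpa using hx))]
    simp
  rw [h2, add_zero]

private lemma aux_pos (μ : Measure ℝ) (g : ℝ → ℝ) (hnn : ∀ x, 0 ≤ g x)
    (hint : Integrable g μ) {c d : ℝ}
    (hμs : 0 < μ (Ioo c d)) (hpos : ∀ x ∈ Ioo c d, 0 < g x) :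
    0 < ∫ x in Ioo c d, g x ∂μ := by
  refine (setIntegral_pos_iff_support_of_nonneg_ae ?_ ?_).2 ?_
  · exact ae_of_all _ hnn
  · exact hint.integrableOn
  · refine lt_of_lt_of_le hμs (measure_mono ?_)
    exact fun x hx => ⟨ne_of_gt (hpos x hx), hx⟩

/-- Suppose the support of the prior `μ` is an interval
`[x̲, x̄]` with `−∞ ≤ x̲ < x̄ ≤ ∞`, and the noise density `fε` is positive on
`(e̲, ē)` and zero outside `[e̲, ē]`, where `−∞ < e̲ < ē < ∞` and
`ē − e̲ ≤ x̄ − x̲`. Then for all `z1 < z2` at which both posteriors are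
defined, there exists `w` with `F(w|z1) > F(w|z2)`: the posterior given the
lower signal never (even weakly) FOSDs the posterior given the higher
signal. -/
theorem stmt_10 (μ : Measure ℝ) [IsProbabilityMeasure μ]
    (fε : ℝ → ℝ) (hmeas : Measurable fε) (hnn : ∀ e, 0 ≤ fε e)
    (hdens : (∫ e, fε e) = 1)
    (xlow xbar : EReal) (hx : xlow < xbar)
    (hμout : μ {x : ℝ | (x : EReal) < xlow ∨ xbar < (x : EReal)} = 0)
    (hμin : ∀ a b : ℝ, a < b →
      (∃ t : ℝ, a < t ∧ t < b ∧ xlow < (t : EReal) ∧ (t : EReal) < xbar) →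
      0 < μ (Ioo a b))
    (elow ebar : ℝ) (he : elow < ebar)
    (hpos : ∀ e ∈ Ioo elow ebar, 0 < fε e)
    (h0 : ∀ e ∉ Icc elow ebar, fε e = 0)
    (hwidth : ((ebar - elow : ℝ) : EReal) ≤ xbar - xlow) :
    ∀ z1 z2 : ℝ, z1 < z2 →
      Integrable (fun x => fε (z1 - x)) μ → 0 < (∫ x, fε (z1 - x) ∂μ) →
      Integrable (fun x => fε (z2 - x)) μ → 0 < (∫ x, fε (z2 - x) ∂μ) →
      ∃ w : ℝ, postCdf μ fε w z2 < postCdf μ fε w z1 := by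
  intro z1 z2 hz h1i h1p h2i h2p
  -- basic support facts for the shifted densities
  have hsupp : ∀ z x : ℝ, fε (z - x) ≠ 0 → z - ebar ≤ x ∧ x ≤ z - elow := by
    intro z x hne
    by_contra hcon
    exact hne (h0 _ (fun hmem => hcon ⟨by linarith [hmem.2], by linarith [hmem.1]⟩))
  have hposx : ∀ z x : ℝ, z - ebar < x → x < z - elow → 0 < fε (z - x) :=
    fun z x h1 h2 => hpos _ ⟨by linarith, by linarith⟩
  -- null sets outside [xlow, xbar]
  have hnull_lt : μ {x : ℝ | (x : EReal) < xlow} = 0 :=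
    measure_mono_null (fun x hx => Or.inl hx) hμout
  have hnull_gt : μ {x : ℝ | xbar < (x : EReal)} = 0 :=
    measure_mono_null (fun x hx => Or.inr hx) hμout
  -- if xbar < z2 - ebar the z2-integral would vanish
  have ha2xbar : ((z2 - ebar : ℝ) : EReal) ≤ xbar := by
    by_contra hcon
    push_neg at hcon
    have : (fun x => fε (z2 - x)) =ᵐ[μ] 0 := by
      refine measure_mono_null ?_ hnull_gt
      intro x hx
      simp only [mem_setOf_eq] at hx ⊢
      have := (hsupp z2 x hx).1
      exact lt_of_lt_of_le hcon (by exact_mod_cast this)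
    exact absurd (integral_eq_zero_of_ae this) (ne_of_gt h2p)
  -- if z1 - elow < xlow the z1-integral would vanish
  have hb1xlow : xlow ≤ ((z1 - elow : ℝ) : EReal) := by
    by_contra hcon
    push_neg at hcon
    have : (fun x => fε (z1 - x)) =ᵐ[μ] 0 := by
      refine measure_mono_null ?_ hnull_lt
      intro x hx
      simp only [mem_setOf_eq] at hx ⊢
      have := (hsupp z1 x hx).2
      exact lt_of_le_of_lt (by exact_mod_cast this) hcon
    exact absurd (integral_eq_zero_of_ae this) (ne_of_gt h1p)
  by_cases hA : xlow < ((z2 - ebar : ℝ) : EReal)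
  · -- Case A: pick w < z2 - ebar with positive posterior-1 mass below w
    have hkey : ∃ w : ℝ, w < z2 - ebar ∧ 0 < ∫ x in Iic w, fε (z1 - x) ∂μ := by
      by_cases hB : z1 - elow < z2 - ebar
      · refine ⟨z1 - elow, hB, ?_⟩
        rw [aux_full μ _ (z1 - elow) h1i (fun x hx => h0 _ (fun hmem => by
          simp only [mem_Icc] at hmem; linarith [hmem.1]))]
        exact h1p
      · push_neg at hB
        obtain ⟨y, hy1, hy2⟩ := exists_between hA
        lift y to ℝ using ⟨ne_top_of_lt hy2, ne_bot_of_gt hy1⟩ with s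
        have hsa2 : s < z2 - ebar := by exact_mod_cast hy2
        have hca2 : max (z1 - ebar) s < z2 - ebar :=
          max_lt (by linarith) hsa2
        refine ⟨(max (z1 - ebar) s + (z2 - ebar)) / 2, by linarith, ?_⟩
        have hcw : max (z1 - ebar) s < (max (z1 - ebar) s + (z2 - ebar)) / 2 := by linarith
        have hμcw : 0 < μ (Ioo (max (z1 - ebar) s) ((max (z1 - ebar) s + (z2 - ebar)) / 2)) := by
          refine hμin _ _ hcw
            ⟨(max (z1 - ebar) s + (max (z1 - ebar) s + (z2 - ebar)) / 2) / 2,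
              by linarith, by linarith, ?_, ?_⟩
          · have hs : s ≤ max (z1 - ebar) s := le_max_right _ _
            calc xlow < (s : EReal) := hy1
              _ ≤ _ := by exact_mod_cast by linarith
          · refine lt_of_lt_of_le ?_ ha2xbar
            exact_mod_cast (by linarith :
              (max (z1 - ebar) s + (max (z1 - ebar) s + (z2 - ebar)) / 2) / 2 < z2 - ebar)
        have hmono : (∫ x in Ioo (max (z1 - ebar) s) ((max (z1 - ebar) s + (z2 - ebar)) / 2),
              fε (z1 - x) ∂μ)
            ≤ ∫ x in Iic ((max (z1 - ebar) s + (z2 - ebar)) / 2), fε (z1 - x) ∂μ := by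
          refine setIntegral_mono_set h1i.integrableOn (ae_of_all _ (fun x => hnn _)) ?_
          exact ae_of_all _ (fun x hx => le_of_lt hx.2)
        refine lt_of_lt_of_le ?_ hmono
        refine aux_pos μ _ (fun x => hnn _) h1i hμcw ?_
        intro x hx
        have h1 := hx.1
        have h2 := hx.2
        have hmax : z1 - ebar ≤ max (z1 - ebar) s := le_max_left _ _
        refine hposx z1 x (by linarith) (by linarith)
    obtain ⟨w, hwa2, hwpos⟩ := hkey
    refine ⟨w, ?_⟩
    have hnum2 : ∫ x in Iic w, fε (z2 - x) ∂μ = 0 := by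
      refine aux_zero μ _ w (fun x hx => h0 _ (fun hmem => ?_))
      simp only [mem_Icc] at hmem
      linarith [hmem.2]
    rw [postCdf, postCdf, hnum2, zero_div]
    exact div_pos hwpos h1p
  · -- Case B: xlow ≥ z2 - ebar; take w = z1 - elow
    push_neg at hA
    have hxlow_ne_bot : xlow ≠ ⊥ :=
      ne_bot_of_gt (lt_of_lt_of_le
        (show ((z2 - ebar - 1 : ℝ) : EReal) < ((z2 - ebar : ℝ) : EReal) by
          exact_mod_cast (by linarith : z2 - ebar - 1 < z2 - ebar)) hA)
    have hxlow_ne_top : xlow ≠ ⊤ := ne_top_of_lt hx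
    lift xlow to ℝ using ⟨hxlow_ne_top, hxlow_ne_bot⟩ with xl
    have hA' : z2 - ebar ≤ xl := by exact_mod_cast hA
    -- z2 - elow ≤ xbar
    have hb2xbar : ((z2 - elow : ℝ) : EReal) ≤ xbar := by
      rcases eq_or_ne xbar ⊤ with h | h
      · rw [h]; exact le_top
      · have hxbar_ne_bot : xbar ≠ ⊥ := ne_bot_of_gt hx
        lift xbar to ℝ using ⟨h, hxbar_ne_bot⟩ with xb
        rw [← EReal.coe_sub] at hwidth
        have hw' : ebar - elow ≤ xb - xl := by exact_mod_cast hwidth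
        exact_mod_cast (by linarith : z2 - elow ≤ xb)
    have hxlb1 : xl ≤ z1 - elow := by exact_mod_cast hb1xlow
    -- posterior 1 cdf at z1 - elow is 1
    have hnum1 : ∫ x in Iic (z1 - elow), fε (z1 - x) ∂μ = ∫ x, fε (z1 - x) ∂μ :=
      aux_full μ _ (z1 - elow) h1i (fun x hx => h0 _ (fun hmem => by
        simp only [mem_Icc] at hmem; linarith [hmem.1]))
    have hF1 : postCdf μ fε (z1 - elow) z1 = 1 := by
      rw [postCdf, hnum1, div_self (ne_of_gt h1p)]
    refine ⟨z1 - elow, ?_⟩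
    rw [hF1, postCdf, div_lt_one h2p]
    by_cases hB : z1 - elow < z2 - ebar
    · have hnum2 : ∫ x in Iic (z1 - elow), fε (z2 - x) ∂μ = 0 := by
        refine aux_zero μ _ (z1 - elow) (fun x hx => h0 _ (fun hmem => ?_))
        simp only [mem_Icc] at hmem
        linarith [hmem.2]
      rw [hnum2]; exact h2p
    · push_neg at hB
      have hb12 : z1 - elow < z2 - elow := by linarith
      have hμ12 : 0 < μ (Ioo (z1 - elow) (z2 - elow)) := by
        refine hμin _ _ hb12 ⟨(z1 - elow + (z2 - elow)) / 2, by linarith, by linarith, ?_, ?_⟩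
        · calc (xl : EReal) ≤ ((z1 - elow : ℝ) : EReal) := by exact_mod_cast hxlb1
            _ < _ := by exact_mod_cast by linarith
        · calc (((z1 - elow + (z2 - elow)) / 2 : ℝ) : EReal)
              < ((z2 - elow : ℝ) : EReal) := by exact_mod_cast by linarith
            _ ≤ xbar := hb2xbar
      have hposint : 0 < ∫ x in Ioo (z1 - elow) (z2 - elow), fε (z2 - x) ∂μ := by
        refine aux_pos μ _ (fun x => hnn _) h2i hμ12 ?_
        intro x hx
        exact hposx z2 x (by linarith [hx.1]) (by linarith [hx.2])
      have hcompl : (∫ x in Iic (z1 - elow), fε (z2 - x) ∂μ)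
            + ∫ x in (Iic (z1 - elow))ᶜ, fε (z2 - x) ∂μ
          = ∫ x, fε (z2 - x) ∂μ := integral_add_compl measurableSet_Iic h2i
      have hmono : (∫ x in Ioo (z1 - elow) (z2 - elow), fε (z2 - x) ∂μ)
          ≤ ∫ x in (Iic (z1 - elow))ᶜ, fε (z2 - x) ∂μ := by
        refine setIntegral_mono_set h2i.integrableOn (ae_of_all _ (fun x => hnn _)) ?_
        exact ae_of_all _ (fun x hx => (show x ∈ (Iic (z1 - elow))ᶜ by simpa using hx.1))
      linarith
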